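/- Let R = K[x,y]/(f) be the coordinate ring of a nonsingular C_{3,4} curve, and ω0 = r2·dx − r1·dy ∈ Ω_{R/K} where 1 = r1·f_x + r2·f_y in R. Then Ω_{R/K} is a free R-module of rank 1 generated by ω0. -/

import Mathlib

open MvPolynomial

set_option maxHeartbeats 1000000
set_option synthInstance.maxHeartbeats 400000

noncomputable section

/-- The normalized defining polynomial of a `C_{3,4}` curve. -/
def c34poly {K : Type*} [Field K] (p2 p1 p0 q2 q1 q0 : K) : MvPolynomial (Fin 2) K :=
  (X 1) ^ 3 - (X 0) ^ 4 + C p2 * (X 0) ^ 2 * X 1 + C p1 * X 0 * X 1 + C p0 * X 1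
    + C q2 * (X 0) ^ 2 + C q1 * X 0 + C q0

section Aux

variable {K : Type*} [Field K]

/-- The quotient ring `K[x,y]/(f)`. -/
abbrev QR (f : MvPolynomial (Fin 2) K) : Type _ :=
  MvPolynomial (Fin 2) K ⧸ Ideal.span {f}

/-- The quotient map. -/
abbrev qmk (f : MvPolynomial (Fin 2) K) : MvPolynomial (Fin 2) K →+* QR f :=
  Ideal.Quotient.mk _

lemma qmk_f_eq_zero (f : MvPolynomial (Fin 2) K) : qmk f f = 0 :=
  Ideal.Quotient.eq_zero_iff_mem.mpr (Ideal.mem_span_singleton_self f)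

/-- The `K`-linear map `g ↦ f_y·∂₀g − f_x·∂₁g` from `K[x,y]` to `K[x,y]/(f)`. -/
def delta0 (f : MvPolynomial (Fin 2) K) : MvPolynomial (Fin 2) K →ₗ[K] QR f :=
  qmk f (pderiv 1 f) •
      ((Ideal.Quotient.mkₐ K (Ideal.span {f})).toLinearMap ∘ₗ (pderiv 0).toLinearMap)
    - qmk f (pderiv 0 f) •
      ((Ideal.Quotient.mkₐ K (Ideal.span {f})).toLinearMap ∘ₗ (pderiv 1).toLinearMap)

lemma delta0_apply (f g : MvPolynomial (Fin 2) K) :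
    delta0 f g = qmk f (pderiv 1 f) * qmk f (pderiv 0 g)
      - qmk f (pderiv 0 f) * qmk f (pderiv 1 g) := by
  simp only [delta0, LinearMap.sub_apply, LinearMap.smul_apply, LinearMap.comp_apply,
    AlgHom.toLinearMap_apply, Ideal.Quotient.mkₐ_eq_mk, Derivation.coeFn_coe, smul_eq_mul]

lemma delta0_ker (f : MvPolynomial (Fin 2) K) :
    (Ideal.span {f}).restrictScalars K ≤ LinearMap.ker (delta0 f) := by
  intro g hg
  rw [Submodule.restrictScalars_mem, Ideal.mem_span_singleton] at hg
  obtain ⟨c, rfl⟩ := hg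
  rw [LinearMap.mem_ker, delta0_apply, Derivation.leibniz, Derivation.leibniz]
  simp only [smul_eq_mul, map_add, map_mul, qmk_f_eq_zero, zero_mul]
  ring

/-- The derivation `delta0` descends to `K[x,y]/(f)` as a `K`-linear map. -/
def deltaLin (f : MvPolynomial (Fin 2) K) : QR f →ₗ[K] QR f :=
  (Submodule.liftQ _ (delta0 f) (delta0_ker f)) ∘ₗ
    (Submodule.Quotient.restrictScalarsEquiv K (Ideal.span {f})).symm.toLinearMap

lemma deltaLin_mk (f g : MvPolynomial (Fin 2) K) : deltaLin f (qmk f g) = delta0 f g := by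
  have h : (Submodule.Quotient.restrictScalarsEquiv K (Ideal.span {f})).symm (qmk f g)
      = Submodule.Quotient.mk g :=
    Submodule.Quotient.restrictScalarsEquiv_symm_mk K _ g
  simp only [deltaLin, LinearMap.comp_apply, LinearEquiv.coe_toLinearMap, h,
    Submodule.liftQ_apply]

/-- The derivation `g ↦ f_y·∂₀g − f_x·∂₁g` on `K[x,y]/(f)`. -/
def delta (f : MvPolynomial (Fin 2) K) : Derivation K (QR f) (QR f) where
  toLinearMap := deltaLin f
  map_one_eq_zero' := by
    show deltaLin f (qmk f 1) = 0
    rw [deltaLin_mk, delta0_apply]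
    simp
  leibniz' a b := by
    obtain ⟨a, rfl⟩ := Ideal.Quotient.mk_surjective a
    obtain ⟨b, rfl⟩ := Ideal.Quotient.mk_surjective b
    show deltaLin f (qmk f a * qmk f b)
      = qmk f a • deltaLin f (qmk f b) + qmk f b • deltaLin f (qmk f a)
    rw [← map_mul, deltaLin_mk, deltaLin_mk, deltaLin_mk, delta0_apply, delta0_apply,
      delta0_apply, Derivation.leibniz, Derivation.leibniz]
    simp only [smul_eq_mul, map_add, map_mul]
    ring

lemma delta_x (f : MvPolynomial (Fin 2) K) : delta f (qmk f (X 0)) = qmk f (pderiv 1 f) := by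
  show deltaLin f (qmk f (X 0)) = _
  rw [deltaLin_mk, delta0_apply]
  simp [pderiv_X_self, pderiv_X_of_ne]

lemma delta_y (f : MvPolynomial (Fin 2) K) : delta f (qmk f (X 1)) = - qmk f (pderiv 0 f) := by
  show deltaLin f (qmk f (X 1)) = _
  rw [deltaLin_mk, delta0_apply]
  simp [pderiv_X_self, pderiv_X_of_ne]

/-- Chain rule: `d(g) = ∂₀g·dx + ∂₁g·dy` in `Ω[R/K]`. -/
lemma chainRule (f g : MvPolynomial (Fin 2) K) :
    KaehlerDifferential.D K (QR f) (qmk f g)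
      = qmk f (pderiv 0 g) • KaehlerDifferential.D K (QR f) (qmk f (X 0))
        + qmk f (pderiv 1 g) • KaehlerDifferential.D K (QR f) (qmk f (X 1)) := by
  induction g using MvPolynomial.induction_on with
  | C a =>
      have h : qmk f (C a) = algebraMap K (QR f) a := rfl
      rw [h, Derivation.map_algebraMap]
      simp [pderiv_C]
      module
  | add p q hp hq =>
      simp only [map_add, hp, hq, add_smul]
      module
  | mul_X p n hp =>
      rw [map_mul, Derivation.leibniz, hp]
      have e01 : pderiv (R := K) 1 (X (0 : Fin 2)) = 0 := pderiv_X_of_ne (by decide)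
      have e10 : pderiv (R := K) 0 (X (1 : Fin 2)) = 0 := pderiv_X_of_ne (by decide)
      fin_cases n <;>
        · rw [Derivation.leibniz, Derivation.leibniz]
          simp only [Fin.mk_zero, Fin.mk_one, Fin.isValue, smul_eq_mul, map_add, map_mul, pderiv_X_self, e01, e10,
            map_one, map_zero, mul_one, mul_zero, one_mul,
            zero_mul, add_zero, zero_add, smul_add, smul_smul, add_smul, zero_smul, smul_zero]
          module

/-- Main generic statement. -/
theorem master (f : MvPolynomial (Fin 2) K) (r1 r2 : QR f)
    (hr : r1 * qmk f (pderiv 0 f) + r2 * qmk f (pderiv 1 f) = 1) :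
    Submodule.span (QR f) {r2 • KaehlerDifferential.D K (QR f) (qmk f (X 0))
        - r1 • KaehlerDifferential.D K (QR f) (qmk f (X 1))} = ⊤ ∧
      ∀ r : QR f, r • (r2 • KaehlerDifferential.D K (QR f) (qmk f (X 0))
        - r1 • KaehlerDifferential.D K (QR f) (qmk f (X 1))) = 0 → r = 0 := by
  set dx := KaehlerDifferential.D K (QR f) (qmk f (X 0)) with hdx
  set dy := KaehlerDifferential.D K (QR f) (qmk f (X 1)) with hdy
  set fx := qmk f (pderiv 0 f) with hfx
  set fy := qmk f (pderiv 1 f) with hfy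
  set ω0 := r2 • dx - r1 • dy with hω0
  -- the fundamental relation  fx • dx + fy • dy = 0
  have hrel : fx • dx + fy • dy = 0 := by
    have h := chainRule f f
    rw [qmk_f_eq_zero, map_zero] at h
    exact h.symm
  -- dx and dy lie in the span of ω0
  have h1 : fy * r2 = 1 - r1 * fx := by linear_combination hr
  have h2 : fx * r1 = 1 + r2 * fy - 1 - r2 * fy + fx * r1 := by ring
  have hdx0 : fy • ω0 = dx := by
    calc fy • ω0 = (fy * r2) • dx - (fy * r1) • dy := by
          rw [hω0]; module
      _ = (1 - r1 * fx) • dx - (fy * r1) • dy := by rw [h1]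
      _ = dx - r1 • (fx • dx + fy • dy) := by module
      _ = dx := by rw [hrel, smul_zero, sub_zero]
  have hdy0 : (-fx) • ω0 = dy := by
    have h3 : fx * r2 = fx * r2 := rfl
    calc (-fx) • ω0 = (fx * r1) • dy - (fx * r2) • dx := by
          rw [hω0]; module
      _ = (1 - r2 * fy) • dy - (fx * r2) • dx := by
          rw [show fx * r1 = 1 - r2 * fy by linear_combination hr]
      _ = dy - r2 • (fx • dx + fy • dy) := by module
      _ = dy := by rw [hrel, smul_zero, sub_zero]
  have hmemx : dx ∈ Submodule.span (QR f) {ω0} := by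
    rw [← hdx0]
    exact Submodule.smul_mem _ _ (Submodule.mem_span_singleton_self _)
  have hmemy : dy ∈ Submodule.span (QR f) {ω0} := by
    rw [← hdy0]
    exact Submodule.smul_mem _ _ (Submodule.mem_span_singleton_self _)
  constructor
  · refine le_antisymm le_top ?_
    rw [← KaehlerDifferential.span_range_derivation K (QR f)]
    refine Submodule.span_le.mpr ?_
    rintro _ ⟨s, rfl⟩
    obtain ⟨g, rfl⟩ := Ideal.Quotient.mk_surjective s
    rw [chainRule f g]
    exact add_mem (Submodule.smul_mem _ _ hmemx) (Submodule.smul_mem _ _ hmemy)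
  · intro r hres
    have hL : (delta f).liftKaehlerDifferential ω0 = 1 := by
      rw [hω0, map_sub, map_smul, map_smul, hdx, hdy,
        Derivation.liftKaehlerDifferential_comp_D, Derivation.liftKaehlerDifferential_comp_D,
        delta_x, delta_y, smul_eq_mul, smul_eq_mul, ← hfx, ← hfy]
      linear_combination hr
    have := congrArg (delta f).liftKaehlerDifferential hres
    rw [map_smul, hL, map_zero, smul_eq_mul, mul_one] at this
    exact this

end Aux

/-- Let `R = K[x,y]/(f)` be the coordinate ring of a nonsingular `C_{3,4}` curve
(in particular a domain), with `1 = r1·f_x + r2·f_y`, and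
`ω0 = r2·dx − r1·dy ∈ Ω_{R/K}`.  Then `Ω_{R/K}` is a free `R`-module of rank 1
generated by `ω0`: `ω0` spans `Ω_{R/K}` over `R` and has trivial annihilator. -/
theorem stmt9 (K : Type*) [Field K] (p2 p1 p0 q2 q1 q0 : K)
    (hdom : IsDomain (MvPolynomial (Fin 2) K ⧸
      Ideal.span {c34poly p2 p1 p0 q2 q1 q0})) :
    let f : MvPolynomial (Fin 2) K := c34poly p2 p1 p0 q2 q1 q0
    let R := MvPolynomial (Fin 2) K ⧸ Ideal.span {f}
    let π : MvPolynomial (Fin 2) K →+* R := Ideal.Quotient.mk _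
    let xR : R := π (X 0)
    let yR : R := π (X 1)
    let fx : R := π (pderiv 0 f)
    let fy : R := π (pderiv 1 f)
    let d : R → Ω[R⁄K] := fun r => KaehlerDifferential.D K R r
    ∀ r1 r2 : R, r1 * fx + r2 * fy = 1 →
      let ω0 : Ω[R⁄K] := r2 • d xR - r1 • d yR
      Submodule.span R {ω0} = ⊤ ∧ ∀ r : R, r • ω0 = 0 → r = 0 := by
  intro f R π xR yR fx fy d r1 r2 hr ω0
  exact master f r1 r2 hr
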